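/- Let ℙ be an algebraic number field of degree m over ℚ with ring of integers 𝒪, and let H ≤ SL(n,𝒪). Suppose Tr([H,H]), the subring of 𝒪 generated by 1 and the traces of elements of the commutator subgroup [H,H], is a complete ℤ-submodule of 𝒪 with ℤ-basis B = (b₁,…,b_m). Let A = (a₁,…,a_m) be a ℤ-basis of 𝒪 and let w be the integer change-of-basis matrix expressing B in terms of A. Then for every maximal ideal I of 𝒪 with det(w)² Δ(A) ∉ I, where Δ(A) = det((Tr_{ℙ/ℚ}(a_i a_j))_{i,j}), the reduction φ_I(H) is not a subfield (C5-) group of SL(n, 𝒪/I); indeed φ_I maps Tr([H,H]) onto all of 𝒪/I. -/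

import Mathlib

open Matrix

set_option synthInstance.maxHeartbeats 400000
set_option maxHeartbeats 1000000

noncomputable section

/-- `G ≤ SL(n, F)` is a subfield (`C5`-) group: there is a proper subfield `E` of `F`
and `x ∈ GL(n, F)` such that every element of `xGx⁻¹` is a scalar multiple of a matrix
with all entries in `E`. -/
def IsSubfieldGroup {n : ℕ} {F : Type*} [CommRing F]
    (G : Subgroup (Matrix.SpecialLinearGroup (Fin n) F)) : Prop :=
  ∃ E : Subring F, E ≠ ⊤ ∧ (∀ y ∈ E, ∀ z : F, y * z = 1 → z ∈ E) ∧
    ∃ x : (Matrix (Fin n) (Fin n) F)ˣ,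
      ∀ g ∈ G, ∃ c : F, ∃ m : Matrix (Fin n) (Fin n) F,
        (∀ i j, m i j ∈ E) ∧
        (x : Matrix (Fin n) (Fin n) F) * (g : Matrix (Fin n) (Fin n) F) *
          ((x⁻¹ : (Matrix (Fin n) (Fin n) F)ˣ) : Matrix (Fin n) (Fin n) F) = c • m

/-- `Tr(S)`: the subring of the coefficient ring generated by (1 and) the traces of the
elements of a matrix group `S`. -/
def trRing {n : ℕ} {A : Type*} [CommRing A]
    (S : Subgroup (Matrix.SpecialLinearGroup (Fin n) A)) : Subring A :=
  Subring.closure {t : A | ∃ g ∈ S, Matrix.trace ((g : Matrix (Fin n) (Fin n) A)) = t}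



section Aux
variable {F : Type*} [CommRing F] {n : ℕ} (E : Subring F)

lemma entriesIn_mul {M N : Matrix (Fin n) (Fin n) F} (hM : ∀ i j, M i j ∈ E)
    (hN : ∀ i j, N i j ∈ E) : ∀ i j, (M * N) i j ∈ E := by
  intro i j
  rw [Matrix.mul_apply]
  exact Subring.sum_mem _ fun k _ => mul_mem (hM i k) (hN k j)

lemma entriesIn_det {M : Matrix (Fin n) (Fin n) F} (hM : ∀ i j, M i j ∈ E) :
    M.det ∈ E := by
  rw [Matrix.det_apply]
  refine Subring.sum_mem _ fun σ _ => ?_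
  rw [Units.smul_def]
  exact zsmul_mem (Subring.prod_mem _ fun i _ => hM _ _) _

lemma entriesIn_adjugate {M : Matrix (Fin n) (Fin n) F} (hM : ∀ i j, M i j ∈ E) :
    ∀ i j, M.adjugate i j ∈ E := by
  intro i j
  rw [Matrix.adjugate_apply]
  refine entriesIn_det E ?_
  intro k l
  rw [Matrix.updateRow_apply]
  split
  · rw [Pi.single_apply]
    split
    · exact one_mem E
    · exact zero_mem E
  · exact hM _ _

lemma entriesIn_one : ∀ i j, (1 : Matrix (Fin n) (Fin n) F) i j ∈ E := by
  intro i j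
  rw [Matrix.one_apply]
  split
  · exact one_mem E
  · exact zero_mem E

end Aux

open scoped commutatorElement in
lemma trace_mem_of_subfield_data {F : Type*} [CommRing F] {n : ℕ}
    (G : Subgroup (Matrix.SpecialLinearGroup (Fin n) F)) (E : Subring F)
    (hinv : ∀ y ∈ E, ∀ z : F, y * z = 1 → z ∈ E)
    (x : (Matrix (Fin n) (Fin n) F)ˣ)
    (hx : ∀ g ∈ G, ∃ c : F, ∃ m : Matrix (Fin n) (Fin n) F,
        (∀ i j, m i j ∈ E) ∧
        (x : Matrix (Fin n) (Fin n) F) * (g : Matrix (Fin n) (Fin n) F) *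
          ((x⁻¹ : (Matrix (Fin n) (Fin n) F)ˣ) : Matrix (Fin n) (Fin n) F) = c • m)
    {g : Matrix.SpecialLinearGroup (Fin n) F} (hg : g ∈ ⁅G, G⁆) :
    Matrix.trace (g : Matrix (Fin n) (Fin n) F) ∈ E := by
  set X : Matrix (Fin n) (Fin n) F := (x : Matrix (Fin n) (Fin n) F) with hX
  set Xi : Matrix (Fin n) (Fin n) F := ((x⁻¹ : (Matrix (Fin n) (Fin n) F)ˣ) : Matrix (Fin n) (Fin n) F) with hXi
  have hXiX : Xi * X = 1 := x.inv_mul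
  have hXXi : X * Xi = 1 := x.mul_inv
  set M : Matrix.SpecialLinearGroup (Fin n) F → Matrix (Fin n) (Fin n) F :=
    fun g => X * (g : Matrix (Fin n) (Fin n) F) * Xi with hM
  have hM1 : M 1 = 1 := by
    simp only [hM, Matrix.SpecialLinearGroup.coe_one, Matrix.mul_one]
    exact hXXi
  have hMmul : ∀ g h : Matrix.SpecialLinearGroup (Fin n) F, M (g * h) = M g * M h := by
    intro g h
    simp only [hM, Matrix.SpecialLinearGroup.coe_mul]
    calc X * ((g : Matrix (Fin n) (Fin n) F) * (h : Matrix (Fin n) (Fin n) F)) * Xi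
        = X * ((g : Matrix (Fin n) (Fin n) F) * ((Xi * X) *
            (h : Matrix (Fin n) (Fin n) F))) * Xi := by
          rw [hXiX, Matrix.one_mul]
      _ = (X * (g : Matrix (Fin n) (Fin n) F) * Xi) *
            (X * (h : Matrix (Fin n) (Fin n) F) * Xi) := by
          simp only [Matrix.mul_assoc]
  have hMdet : ∀ g : Matrix.SpecialLinearGroup (Fin n) F, (M g).det = 1 := by
    intro g
    have hxx : X.det * Xi.det = 1 := by rw [← Matrix.det_mul, hXXi, Matrix.det_one]
    simp only [hM, Matrix.det_mul, g.prop, mul_one]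
    exact hxx
  have hMinv : ∀ g : Matrix.SpecialLinearGroup (Fin n) F, M g⁻¹ = (M g).adjugate := by
    intro g
    have h1 : M g * M g⁻¹ = 1 := by rw [← hMmul, mul_inv_cancel, hM1]
    calc M g⁻¹ = ((M g).adjugate * M g) * M g⁻¹ := by
          rw [Matrix.adjugate_mul, hMdet, one_smul, Matrix.one_mul]
      _ = (M g).adjugate * (M g * M g⁻¹) := by rw [Matrix.mul_assoc]
      _ = (M g).adjugate := by rw [h1, Matrix.mul_one]
  let K : Subgroup (Matrix.SpecialLinearGroup (Fin n) F) :=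
    { carrier := {g | ∀ i j, M g i j ∈ E}
      one_mem' := by intro i j; rw [hM1]; exact entriesIn_one E i j
      mul_mem' := by
        intro g h hg hh i j
        rw [hMmul]
        exact entriesIn_mul E hg hh i j
      inv_mem' := by
        intro g hg i j
        rw [hMinv]
        exact entriesIn_adjugate E hg i j }
  have hsub : ⁅G, G⁆ ≤ K := by
    rw [Subgroup.commutator_le]
    intro g₁ h₁ g₂ h₂
    obtain ⟨c, m, hm, hcm⟩ := hx g₁ h₁
    obtain ⟨d, k, hk, hdk⟩ := hx g₂ h₂
    have hcm' : M g₁ = c • m := hcm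
    have hdk' : M g₂ = d • k := hdk
    show ∀ i j, M ⁅g₁, g₂⁆ i j ∈ E
    intro i j
    have hn : 0 < n := i.pos
    have hdm : (c • m).det = 1 := by rw [← hcm']; exact hMdet g₁
    have hdm' : (d • k).det = 1 := by rw [← hdk']; exact hMdet g₂
    have hcE : c ^ n ∈ E := by
      refine hinv m.det (entriesIn_det E hm) _ ?_
      rw [Matrix.det_smul, Fintype.card_fin] at hdm
      rw [mul_comm]; exact hdm
    have hdE : d ^ n ∈ E := by
      refine hinv k.det (entriesIn_det E hk) _ ?_
      rw [Matrix.det_smul, Fintype.card_fin] at hdm'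
      rw [mul_comm]; exact hdm'
    have hM2 : M ⁅g₁, g₂⁆ = (c ^ n * d ^ n) • (m * k * m.adjugate * k.adjugate) := by
      have e1 : M ⁅g₁, g₂⁆ = (c • m) * (d • k) * ((c • m).adjugate) * ((d • k).adjugate) := by
        rw [commutatorElement_def, hMmul, hMmul, hMmul, hMinv, hMinv, hcm', hdk']
      rw [e1, Matrix.adjugate_smul, Matrix.adjugate_smul, Fintype.card_fin]
      simp only [Matrix.smul_mul, Matrix.mul_smul, smul_smul]
      congr 1
      have h1 : c * c ^ (n - 1) = c ^ n := by
        rw [← pow_succ']; congr 1; omega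
      have h2 : d * d ^ (n - 1) = d ^ n := by
        rw [← pow_succ']; congr 1; omega
      rw [← h1, ← h2]; ring
    rw [hM2, Matrix.smul_apply, smul_eq_mul]
    exact mul_mem (mul_mem hcE hdE)
      (entriesIn_mul E (entriesIn_mul E (entriesIn_mul E hm hk) (entriesIn_adjugate E hm))
        (entriesIn_adjugate E hk) i j)
  have hgK : ∀ i j, M g i j ∈ E := hsub hg
  have htr : Matrix.trace (g : Matrix (Fin n) (Fin n) F) = Matrix.trace (M g) := by
    rw [hM]
    dsimp only
    rw [Matrix.trace_mul_comm, ← Matrix.mul_assoc, hXiX, Matrix.one_mul]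
  rw [htr, Matrix.trace]
  exact Subring.sum_mem _ fun i _ => hgK i i
lemma trace_map_ringHom {R S : Type*} [CommRing R] [CommRing S] (f : R →+* S) {n : ℕ}
    (M : Matrix (Fin n) (Fin n) R) : (M.map f).trace = f M.trace := by
  simp [Matrix.trace, Matrix.map_apply, map_sum]

theorem reduction_not_subfieldGroup_of_discriminant_not_mem
    (P : Type*) [Field P] [NumberField P] (n : ℕ)
    (H : Subgroup (Matrix.SpecialLinearGroup (Fin n) ↥(integralClosure ℤ P)))
    (b : Fin (Module.finrank ℚ P) → ↥(integralClosure ℤ P))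
    (hbmem : ∀ i, b i ∈ trRing ⁅H, H⁆)
    (hbindep : LinearIndependent ℤ b)
    (hbspan : ∀ t ∈ trRing ⁅H, H⁆, t ∈ Submodule.span ℤ (Set.range b))
    (a : Fin (Module.finrank ℚ P) → ↥(integralClosure ℤ P))
    (haindep : LinearIndependent ℤ a)
    (haspan : Submodule.span ℤ (Set.range a) = ⊤)
    (w : Matrix (Fin (Module.finrank ℚ P)) (Fin (Module.finrank ℚ P)) ℤ)
    (hw : ∀ i, b i = ∑ j, w i j • a j)
    (I : Ideal ↥(integralClosure ℤ P)) (hI : I.IsMaximal)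
    (hΔ : ((w.det ^ 2 *
        (Matrix.of fun i j =>
          Algebra.trace ℤ ↥(integralClosure ℤ P) (a i * a j)).det : ℤ) :
      ↥(integralClosure ℤ P)) ∉ I) :
    ¬ IsSubfieldGroup (H.map (Matrix.SpecialLinearGroup.map (Ideal.Quotient.mk I))) ∧
    ∀ y : ↥(integralClosure ℤ P) ⧸ I,
      ∃ t ∈ trRing ⁅H, H⁆, Ideal.Quotient.mk I t = y := by
  classical
  haveI := hI
  -- det w ∉ I
  have hdet : ((w.det : ℤ) : ↥(integralClosure ℤ P)) ∉ I := by
    intro h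
    apply hΔ
    rw [Int.cast_mul, Int.cast_pow]
    exact I.mul_mem_right _ (Ideal.pow_mem_of_mem I h 2 (by norm_num))
  -- det w • a i ∈ span b
  have key1 : ∀ i, (w.det : ℤ) • a i = ∑ j, w.adjugate i j • b j := by
    intro i
    symm
    calc ∑ j, w.adjugate i j • b j
        = ∑ j, ∑ k, (w.adjugate i j * w j k) • a k := by
          simp_rw [hw, Finset.smul_sum, smul_smul]
      _ = ∑ k, ∑ j, (w.adjugate i j * w j k) • a k := Finset.sum_comm
      _ = ∑ k, ((w.adjugate * w) i k) • a k := by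
          simp_rw [Matrix.mul_apply, Finset.sum_smul]
      _ = (w.det : ℤ) • a i := by
          rw [Matrix.adjugate_mul]
          simp [Matrix.smul_apply, Matrix.one_apply, mul_ite, ite_smul]
  have key2 : ∀ x : ↥(integralClosure ℤ P),
      (w.det : ℤ) • x ∈ Submodule.span ℤ (Set.range b) := by
    intro x
    have hx : x ∈ (⊤ : Submodule ℤ ↥(integralClosure ℤ P)) := trivial
    rw [← haspan] at hx
    refine Submodule.span_induction ?_ ?_ ?_ ?_ hx
    · rintro _ ⟨i, rfl⟩
      rw [key1]
      exact Submodule.sum_mem _ fun j _ =>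
        Submodule.smul_mem _ _ (Submodule.subset_span ⟨j, rfl⟩)
    · rw [smul_zero]; exact Submodule.zero_mem _
    · intro y z _ _ hy hz
      rw [smul_add]; exact Submodule.add_mem _ hy hz
    · intro r y _ hy
      rw [smul_comm]; exact Submodule.smul_mem _ _ hy
  have key3 : ∀ x : ↥(integralClosure ℤ P),
      x ∈ Submodule.span ℤ (Set.range b) → x ∈ trRing ⁅H, H⁆ := by
    intro x hx
    refine Submodule.span_induction ?_ ?_ ?_ ?_ hx
    · rintro _ ⟨i, rfl⟩; exact hbmem i
    · exact zero_mem _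
    · intro y z _ _ hy hz; exact add_mem hy hz
    · intro r y _ hy; exact zsmul_mem hy r
  have hfield : IsField (↥(integralClosure ℤ P) ⧸ I) :=
    (Ideal.Quotient.maximal_ideal_iff_isField_quotient I).mp hI
  have surj : ∀ y : ↥(integralClosure ℤ P) ⧸ I,
      ∃ t ∈ trRing ⁅H, H⁆, Ideal.Quotient.mk I t = y := by
    intro y
    set u : ↥(integralClosure ℤ P) ⧸ I :=
      Ideal.Quotient.mk I ((w.det : ℤ) : ↥(integralClosure ℤ P)) with hu_def
    have hu : u ≠ 0 := by
      rw [hu_def, Ne, Ideal.Quotient.eq_zero_iff_mem]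
      exact hdet
    obtain ⟨v, hv⟩ := hfield.mul_inv_cancel hu
    obtain ⟨x, hxx⟩ := Ideal.Quotient.mk_surjective (v * y)
    refine ⟨(w.det : ℤ) • x, key3 _ (key2 x), ?_⟩
    have e : Ideal.Quotient.mk I ((w.det : ℤ) • x) = u * (v * y) := by
      rw [map_zsmul, hxx, hu_def, map_intCast, zsmul_eq_mul]
    rw [e, ← mul_assoc, hv, one_mul]
  refine ⟨?_, surj⟩
  rintro ⟨E, hEtop, hEinv, x, hxE⟩
  apply hEtop
  rw [Subring.eq_top_iff']
  intro y
  obtain ⟨t, ht, rfl⟩ := surj y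
  have hle : trRing ⁅H, H⁆ ≤ E.comap (Ideal.Quotient.mk I) := by
    rw [trRing, Subring.closure_le]
    rintro s ⟨g, hgmem, rfl⟩
    show Ideal.Quotient.mk I
      (Matrix.trace (g : Matrix (Fin n) (Fin n) ↥(integralClosure ℤ P))) ∈ E
    set φ := Matrix.SpecialLinearGroup.map (n := Fin n) (Ideal.Quotient.mk I) with hφ
    have hφg : φ g ∈ ⁅H.map φ, H.map φ⁆ := by
      rw [← Subgroup.map_commutator]
      exact ⟨g, hgmem, rfl⟩
    have hmem := trace_mem_of_subfield_data (H.map φ) E hEinv x hxE hφg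
    have e2 : Matrix.trace ((φ g : Matrix (Fin n) (Fin n) (↥(integralClosure ℤ P) ⧸ I)))
        = Ideal.Quotient.mk I
          (Matrix.trace (g : Matrix (Fin n) (Fin n) ↥(integralClosure ℤ P))) := by
      have e3 : (φ g : Matrix (Fin n) (Fin n) (↥(integralClosure ℤ P) ⧸ I))
          = (g : Matrix (Fin n) (Fin n) ↥(integralClosure ℤ P)).map
              (Ideal.Quotient.mk I) := rfl
      rw [e3, trace_map_ringHom]
    rwa [e2] at hmem
  exact hle ht
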